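/- Let A : X ⇒ X and B : X ⇒ X be maximally monotone operators. If there exists C ∈ {A, B} such that dom C = X and C is 3* monotone, then ran(Id − T_{(A,B)}) ≃ ran A + ran B. -/

import Mathlib

open Set Pointwise

/-- Domain of a set-valued operator. -/
def svDom {X : Type*} (A : X → Set X) : Set X := {x | (A x).Nonempty}

/-- Range of a set-valued operator. -/
def svRan {X : Type*} (A : X → Set X) : Set X := ⋃ x, A x

/-- Monotonicity of a set-valued operator. -/
def IsMonotoneOp {X : Type*} [NormedAddCommGroup X] [InnerProductSpace ℝ X]
    (A : X → Set X) : Prop :=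
  ∀ ⦃x u y v : X⦄, u ∈ A x → v ∈ A y → 0 ≤ (inner ℝ (x - y) (u - v) : ℝ)

/-- Maximal monotonicity of a set-valued operator. -/
def IsMaxMonotoneOp {X : Type*} [NormedAddCommGroup X] [InnerProductSpace ℝ X]
    (A : X → Set X) : Prop :=
  IsMonotoneOp A ∧
    ∀ x u : X, (∀ y v : X, v ∈ A y → 0 ≤ (inner ℝ (x - y) (u - v) : ℝ)) → u ∈ A x

/-- `A` is 3* monotone (rectangular): for every `x ∈ dom A` and `v ∈ ran A`, the set
`{⟪x - z, v - w⟫ : (z,w) ∈ gra A}` is bounded below. -/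
def Is3StarMonotoneOp {X : Type*} [NormedAddCommGroup X] [InnerProductSpace ℝ X]
    (A : X → Set X) : Prop :=
  ∀ x ∈ svDom A, ∀ v ∈ svRan A,
    BddBelow {r : ℝ | ∃ z w : X, w ∈ A z ∧ r = (inner ℝ (x - z) (v - w) : ℝ)}

/-- Two sets are nearly equal if they have the same closure and the same relative
(intrinsic) interior. -/
def NearEq {X : Type*} [NormedAddCommGroup X] [NormedSpace ℝ X] (C D : Set X) : Prop :=
  closure C = closure D ∧ intrinsicInterior ℝ C = intrinsicInterior ℝ D

/-- `J` is the resolvent of `A`: the single-valued, everywhere-defined map with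
`x - J x ∈ A (J x)` for all `x`. -/
def IsResolventOf {X : Type*} [NormedAddCommGroup X] (J : X → X) (A : X → Set X) : Prop :=
  ∀ x : X, x - J x ∈ A (J x)

/-- The Douglas–Rachford operator `T = Id - J_A + J_B ∘ (2 J_A - Id)` built from
the resolvents `J_A` and `J_B`. -/
noncomputable def drT {X : Type*} [NormedAddCommGroup X] [NormedSpace ℝ X]
    (JA JB : X → X) : X → X :=
  fun x => x - JA x + JB ((2 : ℝ) • JA x - x)


open scoped RealInnerProductSpace

/-! ### Auxiliary convex-geometry lemmas -/

section ConvexGeometry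
variable {X : Type*} [NormedAddCommGroup X] [NormedSpace ℝ X]

theorem mem_intrinsicInterior_iff_ball {s : Set X} {x : X} :
    x ∈ intrinsicInterior ℝ s ↔
      x ∈ s ∧ ∃ ρ > (0:ℝ), ∀ v ∈ (affineSpan ℝ s : Set X), dist v x < ρ → v ∈ s := by
  rw [mem_intrinsicInterior]
  constructor
  · rintro ⟨y, hy, rfl⟩
    have hxs : (y : X) ∈ s := Set.mem_preimage.mp (interior_subset (s := Subtype.val ⁻¹' s) hy)
    refine ⟨hxs, ?_⟩
    rw [mem_interior_iff_mem_nhds, Metric.mem_nhds_iff] at hy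
    obtain ⟨ρ, hρ, hball⟩ := hy
    exact ⟨ρ, hρ, fun v hv hd => hball (show (⟨v, hv⟩ : affineSpan ℝ s) ∈ Metric.ball y ρ from
      by simpa [Metric.mem_ball, Subtype.dist_eq] using hd)⟩
  · rintro ⟨hx, ρ, hρ, h⟩
    refine ⟨⟨x, subset_affineSpan ℝ s hx⟩, ?_, rfl⟩
    rw [mem_interior_iff_mem_nhds, Metric.mem_nhds_iff]
    exact ⟨ρ, hρ, fun z hz => h z z.2 (by simpa [Metric.mem_ball, Subtype.dist_eq] using hz)⟩

variable [FiniteDimensional ℝ X]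

theorem closure_subset_affineSpan' (s : Set X) :
    closure s ⊆ (affineSpan ℝ s : Set X) :=
  (affineSpan ℝ s).closed_of_finiteDimensional.closure_subset_iff.mpr (subset_affineSpan ℝ s)

theorem affineSpan_closure_eq (s : Set X) :
    affineSpan ℝ (closure s) = affineSpan ℝ s :=
  le_antisymm (affineSpan_le.mpr (closure_subset_affineSpan' s))
    (affineSpan_mono ℝ subset_closure)

/-- Segment lemma: a strict convex combination of a point of the intrinsic interior and a
point of the closure lies in the intrinsic interior. -/
theorem combo_mem_intrinsicInterior {d : Set X} (hd : Convex ℝ d) {q x' : X}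
    (hq : q ∈ intrinsicInterior ℝ d) (hx' : x' ∈ closure d) {t : ℝ}
    (ht0 : 0 < t) (ht1 : t ≤ 1) : t • q + (1 - t) • x' ∈ intrinsicInterior ℝ d := by
  obtain ⟨hqd, ρ, hρ, hball⟩ := mem_intrinsicInterior_iff_ball.mp hq
  set m := t • q + (1 - t) • x' with hm
  have hx's : x' ∈ (affineSpan ℝ d : Set X) := closure_subset_affineSpan' d hx'
  have hqs : q ∈ (affineSpan ℝ d : Set X) := subset_affineSpan ℝ d hqd
  have hms : m ∈ (affineSpan ℝ d : Set X) := by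
    have heq : m = t • (q -ᵥ x') +ᵥ x' := by simp only [vsub_eq_sub, vadd_eq_add]; module
    rw [heq]
    exact AffineSubspace.smul_vsub_vadd_mem (affineSpan ℝ d) t hqs hx's hx's
  -- choose x'' ∈ d close to x'
  obtain ⟨x'', hx''d, hx''⟩ := Metric.mem_closure_iff.mp hx' (t * ρ / 4) (by positivity)
  set δ := t * ρ / 4 with hδ
  have hδ0 : 0 < δ := by positivity
  have claim : ∀ v ∈ (affineSpan ℝ d : Set X), dist v m < δ → v ∈ d := by
    intro v hv hdist
    set q' := q + (1 / t) • ((v - m) + (1 - t) • (x' - x'')) with hq'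
    have hq's : q' ∈ (affineSpan ℝ d : Set X) := by
      have heq : q' = ((1 / t) • ((v - m) + (1 - t) • (x' - x''))) +ᵥ q := by
        simp only [vadd_eq_add, hq']; abel
      rw [heq]
      refine AffineSubspace.vadd_mem_of_mem_direction ?_ hqs
      refine Submodule.smul_mem _ _ (Submodule.add_mem _ ?_ (Submodule.smul_mem _ _ ?_))
      · have := AffineSubspace.vsub_mem_direction hv hms
        simpa [vsub_eq_sub] using this
      · have := AffineSubspace.vsub_mem_direction hx's (subset_affineSpan ℝ d hx''d)
        simpa [vsub_eq_sub] using this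
    have hq'close : dist q' q < ρ := by
      have hsub : q' - q = (1 / t) • ((v - m) + (1 - t) • (x' - x'')) := by
        rw [hq']; abel
      rw [dist_eq_norm, hsub, norm_smul]
      have h2 : ‖(v - m) + (1 - t) • (x' - x'')‖ ≤ ‖v - m‖ + (1 - t) * ‖x' - x''‖ := by
        refine (norm_add_le _ _).trans ?_
        rw [norm_smul, Real.norm_eq_abs, abs_of_nonneg (by linarith)]
      have h3 : ‖v - m‖ < δ := by rwa [← dist_eq_norm]
      have h4 : (1 - t) * ‖x' - x''‖ < δ := by
        have : ‖x' - x''‖ < δ := by rw [← dist_eq_norm]; exact hx''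
        have hn : 0 ≤ ‖x' - x''‖ := norm_nonneg _
        nlinarith
      have h5 : ‖(1/t : ℝ)‖ = 1 / t := by
        rw [Real.norm_eq_abs, abs_of_pos (by positivity)]
      rw [h5]
      calc 1 / t * ‖(v - m) + (1 - t) • (x' - x'')‖ < 1 / t * (2 * δ) := by
            apply mul_lt_mul_of_pos_left _ (by positivity); linarith
        _ = ρ / 2 := by rw [hδ]; field_simp; ring
        _ < ρ := by linarith
    have hq'd : q' ∈ d := hball q' hq's hq'close
    have hv_eq : v = t • q' + (1 - t) • x'' := by
      have key : t • ((1 / t) • ((v - m) + (1 - t) • (x' - x''))) =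
          (v - m) + (1 - t) • (x' - x'') := by
        rw [smul_smul]
        rw [show t * (1 / t) = 1 by field_simp]
        rw [one_smul]
      rw [hq', smul_add, key, hm]
      module
    rw [hv_eq]
    exact hd hq'd hx''d (le_of_lt ht0) (by linarith) (by ring)
  have hmd : m ∈ d := claim m hms (by simp [hδ0])
  exact mem_intrinsicInterior_iff_ball.mpr ⟨hmd, δ, hδ0, claim⟩

theorem closure_intrinsicInterior_eq' {d : Set X} (hd : Convex ℝ d) (hne : d.Nonempty) :
    closure (intrinsicInterior ℝ d) = closure d := by
  refine subset_antisymm (closure_mono intrinsicInterior_subset) ?_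
  have hsub : d ⊆ closure (intrinsicInterior ℝ d) := by
    intro x hx
    obtain ⟨q, hq⟩ := hne.intrinsicInterior hd
    rw [Metric.mem_closure_iff]
    intro ε hε
    set t : ℝ := min 1 (ε / (‖q - x‖ + 1)) with ht
    have hqx : (0:ℝ) < ‖q - x‖ + 1 := by positivity
    have ht0 : 0 < t := lt_min one_pos (by positivity)
    have ht1 : t ≤ 1 := min_le_left _ _
    refine ⟨t • q + (1 - t) • x, combo_mem_intrinsicInterior hd hq (subset_closure hx) ht0 ht1, ?_⟩
    have heq2 : x - (t • q + (1 - t) • x) = t • (x - q) := by module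
    rw [dist_eq_norm, heq2, norm_smul, Real.norm_eq_abs, abs_of_pos ht0, norm_sub_rev]
    have h2 : t ≤ ε / (‖q - x‖ + 1) := min_le_right _ _
    calc t * ‖q - x‖ ≤ (ε / (‖q - x‖ + 1)) * ‖q - x‖ := by
          apply mul_le_mul_of_nonneg_right h2 (norm_nonneg _)
      _ < ε := by
          rw [div_mul_eq_mul_div, div_lt_iff₀ hqx]
          have : 0 < ε := hε
          nlinarith [norm_nonneg (q - x)]
  calc closure d ⊆ closure (closure (intrinsicInterior ℝ d)) := closure_mono hsub
    _ = closure (intrinsicInterior ℝ d) := closure_closure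

theorem intrinsicInterior_closure_eq' {d : Set X} (hd : Convex ℝ d) (hne : d.Nonempty) :
    intrinsicInterior ℝ (closure d) = intrinsicInterior ℝ d := by
  have hspan : (affineSpan ℝ (closure d) : Set X) = (affineSpan ℝ d : Set X) := by
    rw [affineSpan_closure_eq]
  ext x
  rw [mem_intrinsicInterior_iff_ball, mem_intrinsicInterior_iff_ball]
  constructor
  · rintro ⟨hx, ρ, hρ, hb⟩
    obtain ⟨q, hq⟩ := hne.intrinsicInterior hd
    have hqs : q ∈ (affineSpan ℝ d : Set X) := subset_affineSpan ℝ d (intrinsicInterior_subset hq)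
    have hxs : x ∈ (affineSpan ℝ d : Set X) := closure_subset_affineSpan' d hx
    set t : ℝ := ρ / (2 * (‖x - q‖ + 1)) with htdef
    have hden : (0:ℝ) < ‖x - q‖ + 1 := by positivity
    have ht0 : 0 < t := by positivity
    set x' := x + t • (x - q) with hx'def
    have hx's : x' ∈ (affineSpan ℝ d : Set X) := by
      have heq : x' = (t • (x -ᵥ q)) +ᵥ x := by simp only [hx'def, vsub_eq_sub, vadd_eq_add]; abel
      rw [heq]
      exact AffineSubspace.vadd_mem_of_mem_direction
        (Submodule.smul_mem _ _ (AffineSubspace.vsub_mem_direction hxs hqs)) hxs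
    have hx'cl : x' ∈ closure d := by
      refine hb x' (by rwa [hspan]) ?_
      have : x' - x = t • (x - q) := by rw [hx'def]; abel
      rw [dist_eq_norm, this, norm_smul, Real.norm_eq_abs, abs_of_pos ht0, htdef]
      rw [div_mul_eq_mul_div, div_lt_iff₀ (by positivity)]
      nlinarith [norm_nonneg (x - q)]
    set lam : ℝ := t / (1 + t) with hlam
    have hlam0 : 0 < lam := by positivity
    have hlam1 : lam ≤ 1 := by
      rw [hlam, div_le_one (by positivity)]; linarith
    have hxcombo : x = lam • q + (1 - lam) • x' := by
      have h1t : (1 + t) ≠ 0 := by positivity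
      have h1 : (1 - lam) = 1 / (1 + t) := by
        rw [hlam]; field_simp; ring
      rw [h1, hlam, hx'def]
      match_scalars <;> field_simp <;> ring
    have hfin := combo_mem_intrinsicInterior hd hq hx'cl hlam0 hlam1
    rw [← hxcombo] at hfin
    exact mem_intrinsicInterior_iff_ball.mp hfin
  · rintro ⟨hx, ρ, hρ, hb⟩
    refine ⟨subset_closure hx, ρ, hρ, fun v hv hd' => subset_closure ?_⟩
    exact hb v (by rwa [hspan] at hv) hd'

theorem intrinsicInterior_sandwich {d c : Set X} (hd : Convex ℝ d) (hne : d.Nonempty)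
    (h1 : intrinsicInterior ℝ d ⊆ c) (h2 : c ⊆ d) :
    intrinsicInterior ℝ c = intrinsicInterior ℝ d := by
  have hspan : affineSpan ℝ c = affineSpan ℝ d := by
    refine le_antisymm (affineSpan_mono ℝ h2) ?_
    have h3 : affineSpan ℝ (intrinsicInterior ℝ d) = affineSpan ℝ d := by
      calc affineSpan ℝ (intrinsicInterior ℝ d)
          = affineSpan ℝ (closure (intrinsicInterior ℝ d)) := (affineSpan_closure_eq _).symm
        _ = affineSpan ℝ (closure d) := by rw [closure_intrinsicInterior_eq' hd hne]
        _ = affineSpan ℝ d := affineSpan_closure_eq _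
    calc affineSpan ℝ d = affineSpan ℝ (intrinsicInterior ℝ d) := h3.symm
      _ ≤ affineSpan ℝ c := affineSpan_mono ℝ h1
  have hspan' : (affineSpan ℝ c : Set X) = (affineSpan ℝ d : Set X) := by rw [hspan]
  ext x
  rw [mem_intrinsicInterior_iff_ball, mem_intrinsicInterior_iff_ball]
  constructor
  · rintro ⟨hx, ρ, hρ, hb⟩
    exact ⟨h2 hx, ρ, hρ, fun v hv hdist => h2 (hb v (by rwa [hspan']) hdist)⟩
  · rintro ⟨hx, ρ, hρ, hb⟩
    have hxri : x ∈ intrinsicInterior ℝ d := mem_intrinsicInterior_iff_ball.mpr ⟨hx, ρ, hρ, hb⟩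
    refine ⟨h1 hxri, ρ / 2, by positivity, fun v hv hdist => ?_⟩
    refine h1 (mem_intrinsicInterior_iff_ball.mpr ⟨hb v (by rwa [hspan'] at hv) (by linarith), ρ / 2, by positivity, fun v' hv' hdist' => ?_⟩)
    refine hb v' hv' ?_
    calc dist v' x ≤ dist v' v + dist v x := dist_triangle _ _ _
      _ < ρ := by linarith

end ConvexGeometry

/-! ### Analytic lemmas on the Douglas–Rachford displacement map -/

section Analytic
variable {X : Type*} [NormedAddCommGroup X] [InnerProductSpace ℝ X]
variable {A B : X → Set X} {JA JB : X → X}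

/-- The displacement map of the DR operator. -/
noncomputable def drDisp (JA JB : X → X) : X → X :=
  fun x => JA x - JB ((2 : ℝ) • JA x - x)

theorem drDisp_firm (hmA : IsMonotoneOp A) (hmB : IsMonotoneOp B)
    (hJA : IsResolventOf JA A) (hJB : IsResolventOf JB B) (x y : X) :
    ‖drDisp JA JB x - drDisp JA JB y‖ ^ 2 ≤ ⟪drDisp JA JB x - drDisp JA JB y, x - y⟫ := by
  set gx := (2 : ℝ) • JA x - x with hgx
  set gy := (2 : ℝ) • JA y - y with hgy
  set α := JA x - JA y with hα
  set β := JB gx - JB gy with hβ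
  have hP : (0:ℝ) ≤ ⟪α, (x - y) - α⟫ := by
    have := hmA (hJA x) (hJA y)
    have harg : (x - JA x) - (y - JA y) = (x - y) - α := by rw [hα]; abel
    rwa [harg] at this
  have hQ : (0:ℝ) ≤ ⟪β, ((2:ℝ) • α - (x - y)) - β⟫ := by
    have := hmB (hJB gx) (hJB gy)
    have harg : (gx - JB gx) - (gy - JB gy) = ((2:ℝ) • α - (x - y)) - β := by
      rw [hβ, hgx, hgy, hα]; simp only [smul_sub]; abel
    rw [harg] at this
    rwa [← hβ] at this
  have hΔ : drDisp JA JB x - drDisp JA JB y = α - β := by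
    simp only [drDisp, hα, hβ, hgx, hgy]; abel
  have key : ⟪α - β, (x - y) - (α - β)⟫ =
      ⟪α, (x - y) - α⟫ + ⟪β, ((2:ℝ) • α - (x - y)) - β⟫ + (⟪α, β⟫ - ⟪β, α⟫) := by
    simp only [inner_sub_left, inner_sub_right, real_inner_smul_right]
    ring
  have hself : ⟪α - β, α - β⟫ = ‖α - β‖ ^ 2 := real_inner_self_eq_norm_sq _
  have hsplit : ⟪α - β, x - y⟫ = ‖α - β‖ ^ 2 + ⟪α - β, (x - y) - (α - β)⟫ := by
    conv_rhs => rw [inner_sub_right]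
    rw [hself]; ring
  rw [hΔ, hsplit, key]
  have hsym : ⟪α, β⟫ - ⟪β, α⟫ = 0 := by rw [real_inner_comm]; ring
  linarith

theorem drDisp_mono (hmA : IsMonotoneOp A) (hmB : IsMonotoneOp B)
    (hJA : IsResolventOf JA A) (hJB : IsResolventOf JB B) (x y : X) :
    (0:ℝ) ≤ ⟪drDisp JA JB x - drDisp JA JB y, x - y⟫ :=
  le_trans (by positivity) (drDisp_firm hmA hmB hJA hJB x y)

theorem drDisp_lip (hmA : IsMonotoneOp A) (hmB : IsMonotoneOp B)
    (hJA : IsResolventOf JA A) (hJB : IsResolventOf JB B) (x y : X) :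
    ‖drDisp JA JB x - drDisp JA JB y‖ ≤ ‖x - y‖ := by
  have h1 := drDisp_firm hmA hmB hJA hJB x y
  have h2 := real_inner_le_norm (drDisp JA JB x - drDisp JA JB y) (x - y)
  nlinarith [norm_nonneg (drDisp JA JB x - drDisp JA JB y), norm_nonneg (x - y)]

theorem drT_lip (hmA : IsMonotoneOp A) (hmB : IsMonotoneOp B)
    (hJA : IsResolventOf JA A) (hJB : IsResolventOf JB B) (x y : X) :
    ‖(x - drDisp JA JB x) - (y - drDisp JA JB y)‖ ≤ ‖x - y‖ := by
  set Δ := drDisp JA JB x - drDisp JA JB y with hΔ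
  have h1 := drDisp_firm hmA hmB hJA hJB x y
  have hre : (x - drDisp JA JB x) - (y - drDisp JA JB y) = (x - y) - Δ := by rw [hΔ]; abel
  rw [hre]
  have hexp : ‖(x - y) - Δ‖ ^ 2 = ‖x - y‖ ^ 2 - 2 * ⟪x - y, Δ⟫ + ‖Δ‖ ^ 2 :=
    norm_sub_sq_real _ _
  have hcomm : ⟪x - y, Δ⟫ = ⟪Δ, x - y⟫ := real_inner_comm _ _
  nlinarith [norm_nonneg ((x - y) - Δ), norm_nonneg (x - y)]

theorem exists_eps_solution [CompleteSpace X] (hmA : IsMonotoneOp A) (hmB : IsMonotoneOp B)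
    (hJA : IsResolventOf JA A) (hJB : IsResolventOf JB B) {ε : ℝ} (hε : 0 < ε) (w : X) :
    ∃ x : X, ε • x + drDisp JA JB x = w := by
  set Φ : X → X := fun x => (1 + ε)⁻¹ • (x - drDisp JA JB x + w) with hΦ
  have h1ε : (0:ℝ) < 1 + ε := by linarith
  set K : NNReal := ⟨(1 + ε)⁻¹, by positivity⟩ with hK
  have hKlt : K < 1 := by
    rw [← NNReal.coe_lt_coe]
    show (1 + ε)⁻¹ < (1:ℝ)
    rw [inv_lt_one_iff₀]; right; linarith
  have hlip : LipschitzWith K Φ := by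
    apply LipschitzWith.of_dist_le_mul
    intro x y
    have : Φ x - Φ y = (1 + ε)⁻¹ • ((x - drDisp JA JB x) - (y - drDisp JA JB y)) := by
      show (1 + ε)⁻¹ • (x - drDisp JA JB x + w) - (1 + ε)⁻¹ • (y - drDisp JA JB y + w) = _
      rw [← smul_sub]; congr 1; abel
    rw [dist_eq_norm, this, norm_smul, Real.norm_eq_abs, abs_of_pos (by positivity)]
    rw [dist_eq_norm]
    have := drT_lip hmA hmB hJA hJB x y
    have hKc : (K : ℝ) = (1 + ε)⁻¹ := rfl
    rw [hKc]
    apply mul_le_mul_of_nonneg_left this (by positivity)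
  have hcontr : ContractingWith K Φ := ⟨hKlt, hlip⟩
  obtain ⟨y, hy⟩ := hcontr.exists_fixedPoint 0 (edist_ne_top _ _)
  refine ⟨y, ?_⟩
  have hfix : Φ y = y := hy.1
  have h2 : y - drDisp JA JB y + w = (1 + ε) • y := by
    have := congrArg (fun z => (1 + ε) • z) hfix
    simp only [hΦ] at this
    rw [smul_smul, mul_inv_cancel₀ (by positivity), one_smul] at this
    exact this
  have : w = (1 + ε) • y - (y - drDisp JA JB y) := by rw [← h2]; abel
  rw [this, add_smul, one_smul]; abel

end Analytic

section Core
variable {X : Type*} [NormedAddCommGroup X] [InnerProductSpace ℝ X]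

theorem coreA (y a b z' a' b' : X) :
    ⟪(a' + b') - (a + b), y + a⟫ + ⟪((a' + b') + z') - y, a' - a⟫ +
      ⟪(y - (a + b)) - z', b - b'⟫
      = ⟪a', (a' + b') + z'⟫ + ⟪b' - (a + b), (a + b) + z'⟫ := by
  simp only [inner_sub_left, inner_sub_right, inner_add_left, inner_add_right]
  linarith [real_inner_comm y a, real_inner_comm y b, real_inner_comm y z',
    real_inner_comm y a', real_inner_comm y b', real_inner_comm a b,
    real_inner_comm a z', real_inner_comm a a', real_inner_comm a b',
    real_inner_comm b z', real_inner_comm b a', real_inner_comm b b',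
    real_inner_comm z' a', real_inner_comm z' b', real_inner_comm a' b']

theorem coreB (y a b y' a' b' : X) :
    ⟪(a' + b') - (a + b), y + a⟫ + ⟪y - y', a - a'⟫ +
      ⟪(y' - (a' + b')) - (y - (a + b)), b' - b⟫
      = ⟪a', y'⟫ + ⟪b' - (a + b), (a + b) + (y' - (a' + b'))⟫ := by
  simp only [inner_sub_left, inner_sub_right, inner_add_left, inner_add_right]
  linarith [real_inner_comm y a, real_inner_comm y b, real_inner_comm y y',
    real_inner_comm y a', real_inner_comm y b', real_inner_comm a b,
    real_inner_comm a y', real_inner_comm a a', real_inner_comm a b',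
    real_inner_comm b y', real_inner_comm b a', real_inner_comm b b',
    real_inner_comm y' a', real_inner_comm y' b', real_inner_comm a' b']

end Core

section L3
set_option maxHeartbeats 1000000
variable {X : Type*} [NormedAddCommGroup X] [InnerProductSpace ℝ X] [CompleteSpace X]
variable {A B : X → Set X} {JA JB : X → X}

theorem ranSum_subset_closure_range (hmA : IsMonotoneOp A) (hmB : IsMonotoneOp B)
    (hJA : IsResolventOf JA A) (hJB : IsResolventOf JB B)
    (hC : (svDom A = Set.univ ∧ Is3StarMonotoneOp A) ∨
      (svDom B = Set.univ ∧ Is3StarMonotoneOp B)) :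
    svRan A + svRan B ⊆ closure (Set.range (drDisp JA JB)) := by
  intro w₀ hw
  obtain ⟨a', ha'r, b', hb'r, rfl⟩ := Set.mem_add.mp hw
  obtain ⟨y', ha'⟩ := Set.mem_iUnion.mp ha'r
  obtain ⟨z', hb'⟩ := Set.mem_iUnion.mp hb'r
  have key : ∃ C : ℝ, ∀ ε : ℝ, 0 < ε → ∀ x : X, ε • x + drDisp JA JB x = a' + b' →
      ε * ‖x‖ ^ 2 ≤ C := by
    have common : ∀ ε : ℝ, 0 < ε → ∀ x : X, ε • x + drDisp JA JB x = a' + b' →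
        ε * ‖x‖ ≤ ‖(a' + b') - drDisp JA JB 0‖ := by
      intro ε hε x hsol
      have hm0 := drDisp_mono hmA hmB hJA hJB x 0
      rw [sub_zero] at hm0
      have hεx : drDisp JA JB x = (a' + b') - ε • x := by
        rw [← hsol]; abel
      rw [hεx] at hm0
      have h1 : ⟪(a' + b') - ε • x - drDisp JA JB 0, x⟫ =
          ⟪(a' + b') - drDisp JA JB 0, x⟫ - ε * ‖x‖ ^ 2 := by
        have hre : (a' + b') - ε • x - drDisp JA JB 0 =
            ((a' + b') - drDisp JA JB 0) - ε • x := by abel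
        rw [hre, inner_sub_left, real_inner_smul_left, real_inner_self_eq_norm_sq]
      rw [h1] at hm0
      have h2 : ⟪(a' + b') - drDisp JA JB 0, x⟫ ≤ ‖(a' + b') - drDisp JA JB 0‖ * ‖x‖ :=
        real_inner_le_norm _ _
      rcases eq_or_lt_of_le (norm_nonneg x) with hx0 | hx0
      · rw [← hx0]; simp
      · have : ε * ‖x‖ * ‖x‖ ≤ ‖(a' + b') - drDisp JA JB 0‖ * ‖x‖ := by nlinarith
        exact le_of_mul_le_mul_right this hx0
    have hKs0 : (0:ℝ) ≤ ‖a' + b'‖ + ‖(a' + b') - drDisp JA JB 0‖ := by positivity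
    -- abbreviations as plain real numbers
    rcases hC with ⟨hdA, h3A⟩ | ⟨hdB, h3B⟩
    · -- case A
      obtain ⟨lb, hlb⟩ := h3A ((a' + b') + z') (by rw [hdA]; trivial) a'
        (Set.mem_iUnion.mpr ⟨y', ha'⟩)
      refine ⟨-lb + ‖a'‖ * ‖(a' + b') + z'‖ +
        (‖b'‖ + (‖a' + b'‖ + ‖(a' + b') - drDisp JA JB 0‖)) *
          ((‖a' + b'‖ + ‖(a' + b') - drDisp JA JB 0‖) + ‖z'‖), ?_⟩
      intro ε hε x hsol
      have hKx := common ε hε x hsol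
      have haA : x - JA x ∈ A (JA x) := hJA x
      have hbB : ((2:ℝ) • JA x - x) - JB ((2:ℝ) • JA x - x) ∈ B (JB ((2:ℝ) • JA x - x)) :=
        hJB ((2:ℝ) • JA x - x)
      have hfx : drDisp JA JB x =
          (x - JA x) + (((2:ℝ) • JA x - x) - JB ((2:ℝ) • JA x - x)) := by
        simp only [drDisp]; module
      have hεx : ε • x = (a' + b') -
          ((x - JA x) + (((2:ℝ) • JA x - x) - JB ((2:ℝ) • JA x - x))) := by
        rw [← hfx, ← hsol]; abel
      have hsn : ‖(x - JA x) + (((2:ℝ) • JA x - x) - JB ((2:ℝ) • JA x - x))‖ ≤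
          ‖a' + b'‖ + ‖(a' + b') - drDisp JA JB 0‖ := by
        have hre : (x - JA x) + (((2:ℝ) • JA x - x) - JB ((2:ℝ) • JA x - x)) =
            (a' + b') - ε • x := by rw [hεx]; abel
        rw [hre]
        calc ‖(a' + b') - ε • x‖ ≤ ‖a' + b'‖ + ‖ε • x‖ := norm_sub_le _ _
          _ ≤ ‖a' + b'‖ + ‖(a' + b') - drDisp JA JB 0‖ := by
              refine add_le_add le_rfl ?_
              rw [norm_smul, Real.norm_eq_abs, abs_of_pos hε]; exact hKx
      have hH1 : lb ≤ ⟪((a' + b') + z') - JA x, a' - (x - JA x)⟫ :=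
        hlb ⟨JA x, x - JA x, haA, rfl⟩
      have hH2 : (0:ℝ) ≤ ⟪JB ((2:ℝ) • JA x - x) - z',
          (((2:ℝ) • JA x - x) - JB ((2:ℝ) • JA x - x)) - b'⟫ := hmB hbB hb'
      rw [show JB ((2:ℝ) • JA x - x) - z' = (JA x -
          ((x - JA x) + (((2:ℝ) • JA x - x) - JB ((2:ℝ) • JA x - x)))) - z' from by module]
        at hH2
      have hlhs : ε * ‖x‖ ^ 2 =
          ⟪(a' + b') - ((x - JA x) + (((2:ℝ) • JA x - x) - JB ((2:ℝ) • JA x - x))), x⟫ := by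
        rw [← hεx, real_inner_smul_left, real_inner_self_eq_norm_sq]
      have hid := coreA (JA x) (x - JA x)
        (((2:ℝ) • JA x - x) - JB ((2:ℝ) • JA x - x)) z' a' b'
      have hyax : JA x + (x - JA x) = x := by abel
      rw [hyax] at hid
      have hb1 : ⟪a', (a' + b') + z'⟫ ≤ ‖a'‖ * ‖(a' + b') + z'‖ := real_inner_le_norm _ _
      have hb2 : ⟪b' - ((x - JA x) + (((2:ℝ) • JA x - x) - JB ((2:ℝ) • JA x - x))),
          ((x - JA x) + (((2:ℝ) • JA x - x) - JB ((2:ℝ) • JA x - x))) + z'⟫ ≤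
          (‖b'‖ + (‖a' + b'‖ + ‖(a' + b') - drDisp JA JB 0‖)) *
            ((‖a' + b'‖ + ‖(a' + b') - drDisp JA JB 0‖) + ‖z'‖) := by
        refine (real_inner_le_norm _ _).trans ?_
        have t1 : ‖b' - ((x - JA x) + (((2:ℝ) • JA x - x) - JB ((2:ℝ) • JA x - x)))‖ ≤
            ‖b'‖ + (‖a' + b'‖ + ‖(a' + b') - drDisp JA JB 0‖) :=
          (norm_sub_le _ _).trans (by linarith)
        have t2 : ‖((x - JA x) + (((2:ℝ) • JA x - x) - JB ((2:ℝ) • JA x - x))) + z'‖ ≤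
            (‖a' + b'‖ + ‖(a' + b') - drDisp JA JB 0‖) + ‖z'‖ :=
          (norm_add_le _ _).trans (by linarith)
        have h0 := norm_nonneg (b' - ((x - JA x) + (((2:ℝ) • JA x - x) - JB ((2:ℝ) • JA x - x))))
        have h0' := norm_nonneg (((x - JA x) + (((2:ℝ) • JA x - x) - JB ((2:ℝ) • JA x - x))) + z')
        nlinarith
      linarith
    · -- case B
      obtain ⟨lb, hlb⟩ := h3B (y' - (a' + b')) (by rw [hdB]; trivial) b'
        (Set.mem_iUnion.mpr ⟨z', hb'⟩)
      refine ⟨-lb + ‖a'‖ * ‖y'‖ +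
        (‖b'‖ + (‖a' + b'‖ + ‖(a' + b') - drDisp JA JB 0‖)) *
          ((‖a' + b'‖ + ‖(a' + b') - drDisp JA JB 0‖) + ‖y' - (a' + b')‖), ?_⟩
      intro ε hε x hsol
      have hKx := common ε hε x hsol
      have haA : x - JA x ∈ A (JA x) := hJA x
      have hbB : ((2:ℝ) • JA x - x) - JB ((2:ℝ) • JA x - x) ∈ B (JB ((2:ℝ) • JA x - x)) :=
        hJB ((2:ℝ) • JA x - x)
      have hfx : drDisp JA JB x =
          (x - JA x) + (((2:ℝ) • JA x - x) - JB ((2:ℝ) • JA x - x)) := by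
        simp only [drDisp]; module
      have hεx : ε • x = (a' + b') -
          ((x - JA x) + (((2:ℝ) • JA x - x) - JB ((2:ℝ) • JA x - x))) := by
        rw [← hfx, ← hsol]; abel
      have hsn : ‖(x - JA x) + (((2:ℝ) • JA x - x) - JB ((2:ℝ) • JA x - x))‖ ≤
          ‖a' + b'‖ + ‖(a' + b') - drDisp JA JB 0‖ := by
        have hre : (x - JA x) + (((2:ℝ) • JA x - x) - JB ((2:ℝ) • JA x - x)) =
            (a' + b') - ε • x := by rw [hεx]; abel
        rw [hre]
        calc ‖(a' + b') - ε • x‖ ≤ ‖a' + b'‖ + ‖ε • x‖ := norm_sub_le _ _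
          _ ≤ ‖a' + b'‖ + ‖(a' + b') - drDisp JA JB 0‖ := by
              refine add_le_add le_rfl ?_
              rw [norm_smul, Real.norm_eq_abs, abs_of_pos hε]; exact hKx
      have hH1 : (0:ℝ) ≤ ⟪JA x - y', (x - JA x) - a'⟫ := hmA haA ha'
      have hH2 : lb ≤ ⟪(y' - (a' + b')) - JB ((2:ℝ) • JA x - x),
          b' - (((2:ℝ) • JA x - x) - JB ((2:ℝ) • JA x - x))⟫ :=
        hlb ⟨JB ((2:ℝ) • JA x - x), ((2:ℝ) • JA x - x) - JB ((2:ℝ) • JA x - x), hbB, rfl⟩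
      rw [show (y' - (a' + b')) - JB ((2:ℝ) • JA x - x) = (y' - (a' + b')) - (JA x -
          ((x - JA x) + (((2:ℝ) • JA x - x) - JB ((2:ℝ) • JA x - x)))) from by module]
        at hH2
      have hlhs : ε * ‖x‖ ^ 2 =
          ⟪(a' + b') - ((x - JA x) + (((2:ℝ) • JA x - x) - JB ((2:ℝ) • JA x - x))), x⟫ := by
        rw [← hεx, real_inner_smul_left, real_inner_self_eq_norm_sq]
      have hid := coreB (JA x) (x - JA x)
        (((2:ℝ) • JA x - x) - JB ((2:ℝ) • JA x - x)) y' a' b'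
      have hyax : JA x + (x - JA x) = x := by abel
      rw [hyax] at hid
      have hb1 : ⟪a', y'⟫ ≤ ‖a'‖ * ‖y'‖ := real_inner_le_norm _ _
      have hb2 : ⟪b' - ((x - JA x) + (((2:ℝ) • JA x - x) - JB ((2:ℝ) • JA x - x))),
          ((x - JA x) + (((2:ℝ) • JA x - x) - JB ((2:ℝ) • JA x - x))) + (y' - (a' + b'))⟫ ≤
          (‖b'‖ + (‖a' + b'‖ + ‖(a' + b') - drDisp JA JB 0‖)) *
            ((‖a' + b'‖ + ‖(a' + b') - drDisp JA JB 0‖) + ‖y' - (a' + b')‖) := by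
        refine (real_inner_le_norm _ _).trans ?_
        have t1 : ‖b' - ((x - JA x) + (((2:ℝ) • JA x - x) - JB ((2:ℝ) • JA x - x)))‖ ≤
            ‖b'‖ + (‖a' + b'‖ + ‖(a' + b') - drDisp JA JB 0‖) :=
          (norm_sub_le _ _).trans (by linarith)
        have t2 : ‖((x - JA x) + (((2:ℝ) • JA x - x) - JB ((2:ℝ) • JA x - x))) + (y' - (a' + b'))‖ ≤
            (‖a' + b'‖ + ‖(a' + b') - drDisp JA JB 0‖) + ‖y' - (a' + b')‖ :=
          (norm_add_le _ _).trans (by linarith)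
        have h0 := norm_nonneg (b' - ((x - JA x) + (((2:ℝ) • JA x - x) - JB ((2:ℝ) • JA x - x))))
        have h0' := norm_nonneg (((x - JA x) + (((2:ℝ) • JA x - x) - JB ((2:ℝ) • JA x - x))) + (y' - (a' + b')))
        nlinarith
      linarith
  obtain ⟨C, hCbound⟩ := key
  have hC0 : 0 ≤ C := by
    obtain ⟨x₁, hx₁⟩ := exists_eps_solution hmA hmB hJA hJB one_pos (a' + b')
    have := hCbound 1 one_pos x₁ hx₁
    nlinarith [norm_nonneg x₁, sq_nonneg ‖x₁‖]
  rw [Metric.mem_closure_iff]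
  intro δ hδ
  have hεpos : 0 < δ ^ 2 / (2 * (C + 1)) := by positivity
  obtain ⟨x, hx⟩ := exists_eps_solution hmA hmB hJA hJB hεpos (a' + b')
  refine ⟨drDisp JA JB x, Set.mem_range_self x, ?_⟩
  have hwd : (a' + b') - drDisp JA JB x = (δ ^ 2 / (2 * (C + 1))) • x := by
    rw [← hx]; abel
  rw [dist_eq_norm, hwd, norm_smul, Real.norm_eq_abs, abs_of_pos hεpos]
  have hb := hCbound _ hεpos x hx
  have hsq : ((δ ^ 2 / (2 * (C + 1))) * ‖x‖) ^ 2 ≤ (δ ^ 2 / (2 * (C + 1))) * C := by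
    have hre : ((δ ^ 2 / (2 * (C + 1))) * ‖x‖) ^ 2 =
        (δ ^ 2 / (2 * (C + 1))) * ((δ ^ 2 / (2 * (C + 1))) * ‖x‖ ^ 2) := by ring
    rw [hre]
    exact mul_le_mul_of_nonneg_left hb (le_of_lt hεpos)
  have hεC : (δ ^ 2 / (2 * (C + 1))) * C < δ ^ 2 := by
    rw [div_mul_eq_mul_div, div_lt_iff₀ (by positivity)]
    nlinarith
  nlinarith [mul_nonneg (le_of_lt hεpos) (norm_nonneg x)]

end L3

section L4
open Filter
variable {X : Type*} [NormedAddCommGroup X] [InnerProductSpace ℝ X] [FiniteDimensional ℝ X]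
variable {A B : X → Set X} {JA JB : X → X}

set_option maxHeartbeats 2000000 in
theorem ri_convexHull_subset_range (hmA : IsMonotoneOp A) (hmB : IsMonotoneOp B)
    (hJA : IsResolventOf JA A) (hJB : IsResolventOf JB B) :
    intrinsicInterior ℝ (convexHull ℝ (Set.range (drDisp JA JB))) ⊆
      Set.range (drDisp JA JB) := by
  intro u hu
  obtain ⟨huC, ρ, hρ, hball⟩ := mem_intrinsicInterior_iff_ball.mp hu
  by_contra hno
  have hne : ∀ x : X, drDisp JA JB x ≠ u := fun x hx => hno ⟨x, hx⟩
  have hsolex : ∀ n : ℕ, ∃ x : X, ((n:ℝ) + 1)⁻¹ • x + drDisp JA JB x = u :=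
    fun n => exists_eps_solution hmA hmB hJA hJB (by positivity) u
  choose xs hxs using hsolex
  have hcont : Continuous (drDisp JA JB) := by
    have hl : LipschitzWith 1 (drDisp JA JB) := LipschitzWith.of_dist_le_mul (fun a b => by
      rw [dist_eq_norm, dist_eq_norm, NNReal.coe_one, one_mul]
      exact drDisp_lip hmA hmB hJA hJB a b)
    exact hl.continuous
  have hinv0 : ∀ (g : ℕ → ℕ), StrictMono g →
      Tendsto (fun n => ((g n : ℝ) + 1)⁻¹) atTop (nhds 0) := by
    intro g hg
    apply tendsto_inv_atTop_zero.comp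
    apply tendsto_atTop_add_const_right
    exact tendsto_natCast_atTop_atTop.comp hg.tendsto_atTop
  have htends : Tendsto (fun n => ‖xs n‖) atTop atTop := by
    rw [tendsto_atTop_atTop]
    by_contra hcon
    push_neg at hcon
    obtain ⟨b, hb⟩ := hcon
    have hfreq : ∃ᶠ n in atTop, ‖xs n‖ < b := by
      rw [Filter.frequently_atTop]
      intro N; obtain ⟨n, hn, h⟩ := hb N; exact ⟨n, hn, h⟩
    obtain ⟨φ, hφmono, hφ⟩ := Filter.extraction_of_frequently_atTop hfreq
    have hmem : ∀ n, xs (φ n) ∈ Metric.closedBall (0:X) b := fun n => by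
      simpa [Metric.mem_closedBall, dist_eq_norm] using (hφ n).le
    obtain ⟨xb, _, ψ, hψmono, hψtend⟩ := (isCompact_closedBall (0:X) b).tendsto_subseq hmem
    have h1 : Tendsto (fun n => drDisp JA JB (xs (φ (ψ n)))) atTop
        (nhds (drDisp JA JB xb)) := (hcont.tendsto _).comp hψtend
    have h2 : Tendsto (fun n => drDisp JA JB (xs (φ (ψ n)))) atTop (nhds u) := by
      have heq : ∀ n : ℕ, drDisp JA JB (xs (φ (ψ n))) =
          u - ((φ (ψ n) : ℝ) + 1)⁻¹ • xs (φ (ψ n)) := fun n => by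
        rw [← hxs (φ (ψ n))]; abel
      have hz : Tendsto (fun n => ((φ (ψ n) : ℝ) + 1)⁻¹ • xs (φ (ψ n))) atTop (nhds 0) := by
        have hzb : Tendsto (fun n => ((φ (ψ n) : ℝ) + 1)⁻¹ * b) atTop (nhds 0) := by
          have := (hinv0 (φ ∘ ψ) (hφmono.comp hψmono)).mul_const b
          simpa using this
        refine squeeze_zero_norm (fun n => ?_) hzb
        rw [norm_smul, Real.norm_eq_abs, abs_of_pos (by positivity)]
        exact mul_le_mul_of_nonneg_left (hφ (ψ n)).le (by positivity)
      have := tendsto_const_nhds (x := u) (f := atTop (α := ℕ)) |>.sub hz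
      rw [sub_zero] at this
      exact this.congr (fun n => (heq n).symm)
    exact hne xb (tendsto_nhds_unique h1 h2)
  -- membership of xs n in the direction of the affine span
  have huspan : u ∈ affineSpan ℝ (convexHull ℝ (Set.range (drDisp JA JB))) :=
    subset_affineSpan ℝ _ huC
  have hxdir : ∀ n : ℕ, xs n ∈
      (affineSpan ℝ (convexHull ℝ (Set.range (drDisp JA JB)))).direction := by
    intro n
    have hfspan : drDisp JA JB (xs n) ∈
        affineSpan ℝ (convexHull ℝ (Set.range (drDisp JA JB))) :=
      subset_affineSpan ℝ _ (subset_convexHull ℝ _ (Set.mem_range_self _))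
    have hdiff : u - drDisp JA JB (xs n) ∈
        (affineSpan ℝ (convexHull ℝ (Set.range (drDisp JA JB)))).direction := by
      simpa [vsub_eq_sub] using AffineSubspace.vsub_mem_direction huspan hfspan
    have hxeq : xs n = ((n:ℝ) + 1) • (u - drDisp JA JB (xs n)) := by
      have heq : ((n:ℝ) + 1)⁻¹ • xs n = u - drDisp JA JB (xs n) := by
        rw [← hxs n]; abel
      have := congrArg (fun v => ((n:ℝ) + 1) • v) heq
      simpa [smul_smul, mul_inv_cancel₀ (show ((n:ℝ)+1) ≠ 0 by positivity)] using this
    rw [hxeq]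
    exact Submodule.smul_mem _ _ hdiff
  obtain ⟨N₀, hN₀⟩ := (tendsto_atTop_atTop.mp htends) 1
  have hxpos : ∀ n : ℕ, (1:ℝ) ≤ ‖xs (n + N₀)‖ := fun n => hN₀ (n + N₀) (Nat.le_add_left _ _)
  have hqmem : ∀ n : ℕ, ‖xs (n + N₀)‖⁻¹ • xs (n + N₀) ∈ Metric.closedBall (0:X) 1 := by
    intro n
    have h1 : (0:ℝ) < ‖xs (n + N₀)‖ := lt_of_lt_of_le one_pos (hxpos n)
    simp only [Metric.mem_closedBall, dist_eq_norm, sub_zero, norm_smul, Real.norm_eq_abs,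
      abs_of_pos (inv_pos.mpr h1)]
    rw [inv_mul_cancel₀ (ne_of_gt h1)]
  obtain ⟨e0, _, ψ, hψmono, hψtend⟩ := (isCompact_closedBall (0:X) 1).tendsto_subseq hqmem
  have hq1 : ∀ n : ℕ, ‖‖xs (n + N₀)‖⁻¹ • xs (n + N₀)‖ = 1 := by
    intro n
    have h1 : (0:ℝ) < ‖xs (n + N₀)‖ := lt_of_lt_of_le one_pos (hxpos n)
    rw [norm_smul, Real.norm_eq_abs, abs_of_pos (inv_pos.mpr h1),
      inv_mul_cancel₀ (ne_of_gt h1)]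
  have he0norm : ‖e0‖ = 1 := by
    have h1 : Tendsto (fun n => ‖‖xs (ψ n + N₀)‖⁻¹ • xs (ψ n + N₀)‖) atTop (nhds ‖e0‖) :=
      (continuous_norm.tendsto e0).comp hψtend
    have h2 : Tendsto (fun n => ‖‖xs (ψ n + N₀)‖⁻¹ • xs (ψ n + N₀)‖) atTop (nhds 1) := by
      have : (fun n => ‖‖xs (ψ n + N₀)‖⁻¹ • xs (ψ n + N₀)‖) = fun _ => (1:ℝ) :=
        funext fun n => hq1 (ψ n)
      rw [this]; exact tendsto_const_nhds
    exact tendsto_nhds_unique h1 h2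
  have he0dir : e0 ∈ (affineSpan ℝ (convexHull ℝ (Set.range (drDisp JA JB)))).direction := by
    refine (Submodule.closed_of_finiteDimensional _).mem_of_tendsto hψtend
      (Filter.Eventually.of_forall fun n => ?_)
    exact Submodule.smul_mem _ _ (hxdir _)
  -- halfspace inequality for every p
  have hhalf : ∀ p : X, ⟪drDisp JA JB p - u, e0⟫ ≤ 0 := by
    intro p
    have hineq : ∀ n : ℕ, ⟪drDisp JA JB p - u, ‖xs (ψ n + N₀)‖⁻¹ • xs (ψ n + N₀)⟫ ≤
        ‖xs (ψ n + N₀)‖⁻¹ * ⟪drDisp JA JB p - u, p⟫ + (((ψ n + N₀ : ℕ) : ℝ) + 1)⁻¹ * ‖p‖ := by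
      intro n
      set m := ψ n + N₀ with hm
      have hnorm1 : (1:ℝ) ≤ ‖xs m‖ := hxpos (ψ n)
      have hpos : (0:ℝ) < ‖xs m‖ := lt_of_lt_of_le one_pos hnorm1
      have hmono := drDisp_mono hmA hmB hJA hJB (xs m) p
      have hfm : drDisp JA JB (xs m) = u - ((m:ℝ) + 1)⁻¹ • xs m := by
        rw [← hxs m]; abel
      rw [hfm] at hmono
      -- 0 ≤ ⟪(u - ε•x) - drDisp p, x - p⟫
      have hre : (u - ((m:ℝ) + 1)⁻¹ • xs m) - drDisp JA JB p =
          -((drDisp JA JB p - u) + ((m:ℝ) + 1)⁻¹ • xs m) := by abel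
      rw [hre, inner_neg_left, neg_nonneg, inner_add_left, inner_sub_right,
        inner_sub_right, real_inner_smul_left, real_inner_smul_left,
        real_inner_self_eq_norm_sq] at hmono
      -- hmono : ⟪c, x⟫ - ⟪c, p⟫ + ((m+1)⁻¹ ‖x‖² - (m+1)⁻¹ ⟪x, p⟫) ≤ 0
      have hxp : ⟪xs m, p⟫ ≤ ‖xs m‖ * ‖p‖ := real_inner_le_norm _ _
      have hε0 : (0:ℝ) < ((m:ℝ) + 1)⁻¹ := by positivity
      have hcx : ⟪drDisp JA JB p - u, xs m⟫ ≤ ⟪drDisp JA JB p - u, p⟫ +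
          ((m:ℝ) + 1)⁻¹ * (‖xs m‖ * ‖p‖) := by nlinarith [sq_nonneg ‖xs m‖]
      rw [real_inner_smul_right]
      have hinv : (0:ℝ) < ‖xs m‖⁻¹ := inv_pos.mpr hpos
      have := mul_le_mul_of_nonneg_left hcx (le_of_lt hinv)
      calc ‖xs m‖⁻¹ * ⟪drDisp JA JB p - u, xs m⟫
          ≤ ‖xs m‖⁻¹ * (⟪drDisp JA JB p - u, p⟫ + ((m:ℝ) + 1)⁻¹ * (‖xs m‖ * ‖p‖)) := this
        _ = ‖xs m‖⁻¹ * ⟪drDisp JA JB p - u, p⟫ +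
            ((m:ℝ) + 1)⁻¹ * (‖xs m‖⁻¹ * ‖xs m‖) * ‖p‖ := by ring
        _ = ‖xs m‖⁻¹ * ⟪drDisp JA JB p - u, p⟫ + ((m:ℝ) + 1)⁻¹ * ‖p‖ := by
            rw [inv_mul_cancel₀ (ne_of_gt hpos)]; ring
    have hLHS : Tendsto (fun n => ⟪drDisp JA JB p - u, ‖xs (ψ n + N₀)‖⁻¹ • xs (ψ n + N₀)⟫)
        atTop (nhds ⟪drDisp JA JB p - u, e0⟫) := by
      exact (Filter.Tendsto.inner tendsto_const_nhds hψtend)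
    have hRHS : Tendsto (fun n => ‖xs (ψ n + N₀)‖⁻¹ * ⟪drDisp JA JB p - u, p⟫ +
        (((ψ n + N₀ : ℕ) : ℝ) + 1)⁻¹ * ‖p‖) atTop (nhds 0) := by
      have hshift : Tendsto (fun n : ℕ => ψ n + N₀) atTop atTop :=
        tendsto_atTop_mono (fun n => Nat.le_add_right (ψ n) N₀) hψmono.tendsto_atTop
      have ht1 : Tendsto (fun n : ℕ => ‖xs (ψ n + N₀)‖) atTop atTop :=
        htends.comp hshift
      have ht2 : Tendsto (fun n : ℕ => ‖xs (ψ n + N₀)‖⁻¹) atTop (nhds 0) :=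
        tendsto_inv_atTop_zero.comp ht1
      have ht3 : Tendsto (fun n : ℕ => (((ψ n + N₀ : ℕ) : ℝ) + 1)⁻¹) atTop (nhds 0) := by
        apply tendsto_inv_atTop_zero.comp
        apply tendsto_atTop_add_const_right
        exact tendsto_natCast_atTop_atTop.comp hshift
      have := (ht2.mul_const ⟪drDisp JA JB p - u, p⟫).add (ht3.mul_const ‖p‖)
      simpa using this
    exact le_of_tendsto_of_tendsto' hLHS hRHS hineq
  -- the convex hull is contained in the halfspace
  have hhull : convexHull ℝ (Set.range (drDisp JA JB)) ⊆ {v : X | ⟪v, e0⟫ ≤ ⟪u, e0⟫} := by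
    apply convexHull_min
    · rintro _ ⟨p, rfl⟩
      have := hhalf p
      rw [inner_sub_left] at this
      simp only [Set.mem_setOf_eq]
      linarith
    · exact convex_halfSpace_le (f := fun v : X => ⟪v, e0⟫)
        ⟨fun a b => inner_add_left a b e0, fun c a => by
          simpa [smul_eq_mul] using real_inner_smul_left a e0 c⟩ ⟪u, e0⟫
  -- test vector
  have hvmem : u + (ρ / 2) • e0 ∈ convexHull ℝ (Set.range (drDisp JA JB)) := by
    refine hball _ ?_ ?_
    · have h1 : ((ρ / 2) • e0) +ᵥ u ∈ affineSpan ℝ (convexHull ℝ (Set.range (drDisp JA JB))) :=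
        AffineSubspace.vadd_mem_of_mem_direction (Submodule.smul_mem _ _ he0dir) huspan
      have : u + (ρ / 2) • e0 = ((ρ / 2) • e0) +ᵥ u := by
        simp only [vadd_eq_add]; abel
      rw [this]
      exact h1
    · rw [dist_eq_norm]
      have : u + (ρ / 2) • e0 - u = (ρ / 2) • e0 := by abel
      rw [this, norm_smul, Real.norm_eq_abs, abs_of_pos (by positivity), he0norm]
      linarith
  have hfin := hhull hvmem
  simp only [Set.mem_setOf_eq, inner_add_left, real_inner_smul_left] at hfin
  have hee : ⟪e0, e0⟫ = 1 := by
    rw [real_inner_self_eq_norm_sq, he0norm]; norm_num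
  rw [hee] at hfin
  linarith

end L4

/-- If one of the maximally monotone operators `A, B` is 3* monotone with full domain,
then `ran (Id - T_{(A,B)}) ≃ ran A + ran B`. -/
theorem ran_id_sub_drT_nearEq_ran_add {X : Type*} [NormedAddCommGroup X]
    [InnerProductSpace ℝ X] [FiniteDimensional ℝ X] (A B : X → Set X)
    (hA : IsMaxMonotoneOp A) (hB : IsMaxMonotoneOp B)
    (hC : (svDom A = Set.univ ∧ Is3StarMonotoneOp A) ∨
      (svDom B = Set.univ ∧ Is3StarMonotoneOp B))
    (JA JB : X → X) (hJA : IsResolventOf JA A) (hJB : IsResolventOf JB B) :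
    NearEq (Set.range fun x => x - drT JA JB x) (svRan A + svRan B) := by
  have hmA := hA.1
  have hmB := hB.1
  have hfun : (fun x => x - drT JA JB x) = drDisp JA JB := by
    funext x; simp only [drT, drDisp]; abel
  rw [hfun]
  have hRS : Set.range (drDisp JA JB) ⊆ svRan A + svRan B := by
    rintro _ ⟨x, rfl⟩
    have hre : drDisp JA JB x =
        (x - JA x) + (((2:ℝ) • JA x - x) - JB ((2:ℝ) • JA x - x)) := by
      simp only [drDisp]; module
    rw [hre]
    exact Set.add_mem_add (Set.mem_iUnion.mpr ⟨JA x, hJA x⟩)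
      (Set.mem_iUnion.mpr ⟨JB ((2:ℝ) • JA x - x), hJB ((2:ℝ) • JA x - x)⟩)
  have hScl : svRan A + svRan B ⊆ closure (Set.range (drDisp JA JB)) :=
    ranSum_subset_closure_range hmA hmB hJA hJB hC
  have hclRS : closure (Set.range (drDisp JA JB)) = closure (svRan A + svRan B) :=
    subset_antisymm (closure_mono hRS) (closure_minimal hScl isClosed_closure)
  have hRne : (Set.range (drDisp JA JB)).Nonempty := ⟨drDisp JA JB 0, Set.mem_range_self 0⟩
  have hSne : (svRan A + svRan B).Nonempty := hRne.mono hRS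
  have hCconv : Convex ℝ (convexHull ℝ (Set.range (drDisp JA JB))) := convex_convexHull ℝ _
  have hDconv : Convex ℝ (convexHull ℝ (svRan A + svRan B)) := convex_convexHull ℝ _
  have hCne : (convexHull ℝ (Set.range (drDisp JA JB))).Nonempty :=
    hRne.mono (subset_convexHull ℝ _)
  have hDne : (convexHull ℝ (svRan A + svRan B)).Nonempty := hSne.mono (subset_convexHull ℝ _)
  have hclCD : closure (convexHull ℝ (Set.range (drDisp JA JB))) =
      closure (convexHull ℝ (svRan A + svRan B)) := by
    have h1 : convexHull ℝ (Set.range (drDisp JA JB)) ⊆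
        closure (convexHull ℝ (svRan A + svRan B)) := by
      apply convexHull_min _ (hDconv.closure)
      calc Set.range (drDisp JA JB) ⊆ closure (Set.range (drDisp JA JB)) := subset_closure
        _ = closure (svRan A + svRan B) := hclRS
        _ ⊆ closure (convexHull ℝ (svRan A + svRan B)) :=
            closure_mono (subset_convexHull ℝ _)
    have h2 : convexHull ℝ (svRan A + svRan B) ⊆
        closure (convexHull ℝ (Set.range (drDisp JA JB))) := by
      apply convexHull_min _ (hCconv.closure)
      calc svRan A + svRan B ⊆ closure (Set.range (drDisp JA JB)) := hScl
        _ ⊆ closure (convexHull ℝ (Set.range (drDisp JA JB))) :=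
            closure_mono (subset_convexHull ℝ _)
    exact subset_antisymm (closure_minimal h1 isClosed_closure)
      (closure_minimal h2 isClosed_closure)
  have hriCD : intrinsicInterior ℝ (convexHull ℝ (Set.range (drDisp JA JB))) =
      intrinsicInterior ℝ (convexHull ℝ (svRan A + svRan B)) := by
    rw [← intrinsicInterior_closure_eq' hCconv hCne, hclCD,
      intrinsicInterior_closure_eq' hDconv hDne]
  have hriD_sub_R : intrinsicInterior ℝ (convexHull ℝ (svRan A + svRan B)) ⊆
      Set.range (drDisp JA JB) := by
    rw [← hriCD]
    exact ri_convexHull_subset_range hmA hmB hJA hJB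
  have hRD : Set.range (drDisp JA JB) ⊆ convexHull ℝ (svRan A + svRan B) :=
    hRS.trans (subset_convexHull ℝ _)
  have hSD : svRan A + svRan B ⊆ convexHull ℝ (svRan A + svRan B) := subset_convexHull ℝ _
  have hriR := intrinsicInterior_sandwich hDconv hDne hriD_sub_R hRD
  have hriS := intrinsicInterior_sandwich hDconv hDne (hriD_sub_R.trans hRS) hSD
  exact ⟨hclRS, by rw [hriR, hriS]⟩
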